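/- Let r,s,t,u be integers with ru−st=1 and let φ₅ : G(r,s,t,u) → ℤ/2ℤ be the (unique) group homomorphism sending the generators a ↦ 1, b ↦ 0, c ↦ 1. Then the kernel of φ₅ is isomorphic, as an abstract group, to the torus-bundle group T(ru+ts, −2rt, −2su, ru+ts). -/

import Mathlib

/-- The relators of the presentation of the fundamental group of the sapphire
Sol 3-manifold determined by the matrix `[[r, s], [t, u]]`:
`a·b·a⁻¹·b`, `c²·a^(−2r)·b^(−s)` and `c·a^(2t)·b^u·c⁻¹·a^(2t)·b^u`,
where `a, b, c` are the generators `of 0, of 1, of 2`. -/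
def sapphireRels (r s t u : ℤ) : Set (FreeGroup (Fin 3)) :=
  { FreeGroup.of 0 * FreeGroup.of 1 * (FreeGroup.of 0)⁻¹ * FreeGroup.of 1,
    FreeGroup.of 2 ^ (2 : ℤ) * FreeGroup.of 0 ^ (-(2 * r)) * FreeGroup.of 1 ^ (-s),
    FreeGroup.of 2 * FreeGroup.of 0 ^ (2 * t) * FreeGroup.of 1 ^ u * (FreeGroup.of 2)⁻¹ *
      FreeGroup.of 0 ^ (2 * t) * FreeGroup.of 1 ^ u }

/-- The fundamental group `G(r,s,t,u)` of the sapphire Sol 3-manifold. -/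
abbrev SapphireGroup (r s t u : ℤ) := PresentedGroup (sapphireRels r s t u)

/-- The relators of the presentation of the fundamental group of the torus bundle
over `S¹` with Anosov gluing matrix `[[m, n], [p, q]]`:
`a·b·a⁻¹·b⁻¹`, `c·a·c⁻¹·b^(−p)·a^(−m)` and `c·b·c⁻¹·b^(−q)·a^(−n)`. -/
def torusBundleRels (m n p q : ℤ) : Set (FreeGroup (Fin 3)) :=
  { FreeGroup.of 0 * FreeGroup.of 1 * (FreeGroup.of 0)⁻¹ * (FreeGroup.of 1)⁻¹,
    FreeGroup.of 2 * FreeGroup.of 0 * (FreeGroup.of 2)⁻¹ *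
      FreeGroup.of 1 ^ (-p) * FreeGroup.of 0 ^ (-m),
    FreeGroup.of 2 * FreeGroup.of 1 * (FreeGroup.of 2)⁻¹ *
      FreeGroup.of 1 ^ (-q) * FreeGroup.of 0 ^ (-n) }

/-- The fundamental group `T(m,n,p,q)` of the torus bundle over the circle. -/
abbrev TorusBundleGroup (m n p q : ℤ) := PresentedGroup (torusBundleRels m n p q)

namespace Stmt4Aux

section Generic
variable {Γ : Type*} [Group Γ]

lemma wmul {x y : Γ} (hc : Commute x y) (i j k l : ℤ) :
    (x ^ i * y ^ j) * (x ^ k * y ^ l) = x ^ (i + k) * y ^ (j + l) := by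
  have h1 : y ^ j * x ^ k = x ^ k * y ^ j := ((hc.symm).zpow_zpow j k).eq
  calc (x ^ i * y ^ j) * (x ^ k * y ^ l) = x ^ i * (y ^ j * x ^ k) * y ^ l := by group
    _ = x ^ i * (x ^ k * y ^ j) * y ^ l := by rw [h1]
    _ = x ^ (i + k) * y ^ (j + l) := by group

lemma wzpow {x y : Γ} (hc : Commute x y) (i j n : ℤ) :
    (x ^ i * y ^ j) ^ n = x ^ (i * n) * y ^ (j * n) := by
  rw [(hc.zpow_zpow i j).mul_zpow, ← zpow_mul, ← zpow_mul]

lemma conj_of_conj {g x y : Γ} (hx : g * x * g⁻¹ = y) : g⁻¹ * y * g = x := by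
  rw [← hx]; group

lemma conj_zpow' (g x : Γ) (n : ℤ) : g * x ^ n * g⁻¹ = (g * x * g⁻¹) ^ n := by
  simpa [MulAut.conj_apply] using (map_zpow (MulAut.conj g) x n)

lemma aut_zpow_fix {Γ : Type*} [Group Γ] (e : Γ ≃* Γ) {x : Γ} (hx : e x = x) :
    ∀ k : ℤ, ((e : MulAut Γ) ^ k) x = x := by
  have hinv : (e : MulAut Γ)⁻¹ x = x := by
    conv_lhs => rw [← hx]
    exact e.symm_apply_apply x
  intro k
  induction k using Int.induction_on with
  | zero => rfl
  | succ n ih => rw [zpow_add_one, MulAut.mul_apply, hx]; exact ih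
  | pred n ih => rw [zpow_sub_one, MulAut.mul_apply, hinv]; exact ih

lemma presented_rel {α : Type*} {rels : Set (FreeGroup α)} {x : FreeGroup α} (hx : x ∈ rels) :
    PresentedGroup.mk rels x = 1 :=
  (QuotientGroup.eq_one_iff x).2 (Subgroup.subset_normalClosure hx)

end Generic

section Sapphire
variable {r s t u : ℤ}

def ga : SapphireGroup r s t u := PresentedGroup.of 0
def gb : SapphireGroup r s t u := PresentedGroup.of 1
def gc : SapphireGroup r s t u := PresentedGroup.of 2

/-- `gw i j = a^(2i) b^j`, written via `(a^2)^i`. -/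
def gw (i j : ℤ) : SapphireGroup r s t u := (ga ^ (2 : ℤ)) ^ i * gb ^ j

lemma gw_congr {i j k l : ℤ} (h1 : i = k) (h2 : j = l) :
    (gw i j : SapphireGroup r s t u) = gw k l := by rw [h1, h2]

lemma grel1 : (ga * gb * ga⁻¹ * gb : SapphireGroup r s t u) = 1 := by
  have := presented_rel (rels := sapphireRels r s t u) (Set.mem_insert _ _)
  simp only [map_mul, map_inv] at this; exact this

lemma grel2 : (gc ^ (2:ℤ) * ga ^ (-(2*r)) * gb ^ (-s) : SapphireGroup r s t u) = 1 := by
  have := presented_rel (rels := sapphireRels r s t u)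
    (Set.mem_insert_of_mem _ (Set.mem_insert _ _))
  simp only [map_mul, map_inv, map_zpow] at this; exact this

lemma grel3 :
    (gc * ga ^ (2*t) * gb ^ u * gc⁻¹ * ga ^ (2*t) * gb ^ u : SapphireGroup r s t u) = 1 := by
  have := presented_rel (rels := sapphireRels r s t u)
    (Set.mem_insert_of_mem _ (Set.mem_insert_of_mem _ rfl))
  simp only [map_mul, map_inv, map_zpow] at this; exact this

lemma hab : (ga * gb * ga⁻¹ : SapphireGroup r s t u) = gb⁻¹ :=
  mul_eq_one_iff_eq_inv.mp grel1

lemma hconj_b (j : ℤ) : (ga * gb ^ j * ga⁻¹ : SapphireGroup r s t u) = gb ^ (-j) := by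
  rw [conj_zpow', hab, inv_zpow, zpow_neg]

lemma hconj_b' (j : ℤ) : (ga⁻¹ * gb ^ j * ga : SapphireGroup r s t u) = gb ^ (-j) := by
  have := conj_of_conj (hconj_b (j := -j) (r := r) (s := s) (t := t) (u := u))
  simpa using this

lemma hcomm : Commute (ga ^ (2:ℤ) : SapphireGroup r s t u) gb := by
  have key : (ga ^ (2:ℤ) * gb * (ga ^ (2:ℤ))⁻¹ : SapphireGroup r s t u) = gb := by
    calc (ga ^ (2:ℤ) * gb * (ga ^ (2:ℤ))⁻¹ : SapphireGroup r s t u)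
        = ga * (ga * gb ^ (1:ℤ) * ga⁻¹) * ga⁻¹ := by
          rw [show (2:ℤ) = 1 + 1 from rfl, zpow_add, zpow_one]; group
      _ = ga * gb ^ (-1:ℤ) * ga⁻¹ := by rw [hconj_b]
      _ = gb ^ (-(-1):ℤ) := hconj_b _
      _ = gb := by norm_num
  have : (ga ^ (2:ℤ) * gb : SapphireGroup r s t u) = gb * ga ^ (2:ℤ) := by
    conv_rhs => rw [← key]
    group
  exact this

lemma gw_mul (i j k l : ℤ) : (gw i j * gw k l : SapphireGroup r s t u) = gw (i+k) (j+l) :=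
  wmul hcomm i j k l

lemma gw_zpow (i j n : ℤ) : ((gw i j : SapphireGroup r s t u)) ^ n = gw (i*n) (j*n) :=
  wzpow hcomm i j n

lemma gw_split (i j : ℤ) : (gw i j : SapphireGroup r s t u) = (gw 1 0) ^ i * (gw 0 1) ^ j := by
  rw [gw_zpow, gw_zpow, gw_mul]
  exact gw_congr (by ring) (by ring)

lemma gc2 : (gc ^ (2:ℤ) : SapphireGroup r s t u) = gw r s := by
  have e1 : (gc ^ (2:ℤ) : SapphireGroup r s t u) = gb ^ s * ga ^ (2*r) := by
    calc (gc ^ (2:ℤ) : SapphireGroup r s t u)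
        = (gc ^ (2:ℤ) * ga ^ (-(2*r)) * gb ^ (-s)) * (gb ^ s * ga ^ (2*r)) := by group
      _ = gb ^ s * ga ^ (2*r) := by rw [grel2]; group
  rw [e1, gw, zpow_mul ga 2 r]
  exact ((hcomm.zpow_zpow r s).eq).symm


lemma gw_def (i j : ℤ) : (gw i j : SapphireGroup r s t u) = ga ^ (2*i) * gb ^ j := by
  rw [gw, zpow_mul]

lemma ha_gw (i j : ℤ) : (ga * gw i j * ga⁻¹ : SapphireGroup r s t u) = gw i (-j) := by
  have e1 : (ga * (ga ^ (2:ℤ)) * ga⁻¹ : SapphireGroup r s t u) = ga ^ (2:ℤ) := by group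
  calc (ga * gw i j * ga⁻¹ : SapphireGroup r s t u)
      = (ga * ga ^ (2:ℤ) * ga⁻¹) ^ i * (ga * gb ^ j * ga⁻¹) := by
        rw [← conj_zpow']; rw [gw]; group
    _ = (ga ^ (2:ℤ)) ^ i * gb ^ (-j) := by rw [e1, hconj_b]
    _ = gw i (-j) := rfl

lemma ha_gw' (i j : ℤ) : (ga⁻¹ * gw i j * ga : SapphireGroup r s t u) = gw i (-j) := by
  have := conj_of_conj (ha_gw (r := r) (s := s) (t := t) (u := u) i (-j))
  simpa using this

lemma gconj3 : (gc * gw t u * gc⁻¹ : SapphireGroup r s t u) = gw (-t) (-u) := by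
  have e3 : (gc * (ga ^ (2*t) * gb ^ u) * gc⁻¹ : SapphireGroup r s t u)
      = gb ^ (-u) * ga ^ (-(2*t)) := by
    calc (gc * (ga ^ (2*t) * gb ^ u) * gc⁻¹ : SapphireGroup r s t u)
        = (gc * ga ^ (2*t) * gb ^ u * gc⁻¹ * ga ^ (2*t) * gb ^ u) *
            (gb ^ (-u) * ga ^ (-(2*t))) := by group
      _ = gb ^ (-u) * ga ^ (-(2*t)) := by rw [grel3]; group
  rw [gw_def, e3, gw_def]
  have : Commute (ga ^ (2*(-t)) : SapphireGroup r s t u) (gb ^ (-u)) := by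
    rw [zpow_mul ga 2 (-t)]; exact hcomm.zpow_zpow (-t) (-u)
  rw [show -(2*t) = 2*(-t) by ring]
  exact this.symm.eq

lemma gcw_rs : (gc * gw r s * gc⁻¹ : SapphireGroup r s t u) = gw r s := by
  rw [← gc2]; group

lemma gw10_decomp (h : r * u - s * t = 1) :
    (gw 1 0 : SapphireGroup r s t u) = (gw t u) ^ (-s) * (gw r s) ^ u := by
  rw [gw_zpow, gw_zpow, gw_mul]
  exact (gw_congr (by linear_combination h) (by ring)).symm

lemma gw01_decomp (h : r * u - s * t = 1) :
    (gw 0 1 : SapphireGroup r s t u) = (gw t u) ^ r * (gw r s) ^ (-t) := by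
  rw [gw_zpow, gw_zpow, gw_mul]
  exact (gw_congr (by ring) (by linear_combination h)).symm

lemma gc_gw10 (h : r * u - s * t = 1) :
    (gc * gw 1 0 * gc⁻¹ : SapphireGroup r s t u) = gw (r*u+t*s) (2*s*u) := by
  calc (gc * gw 1 0 * gc⁻¹ : SapphireGroup r s t u)
      = (gc * gw t u * gc⁻¹) ^ (-s) * (gc * gw r s * gc⁻¹) ^ u := by
        rw [← conj_zpow', ← conj_zpow', gw10_decomp h]; group
    _ = (gw (-t) (-u)) ^ (-s) * (gw r s) ^ u := by rw [gconj3, gcw_rs]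
    _ = gw (r*u+t*s) (2*s*u) := by
        rw [gw_zpow, gw_zpow, gw_mul]; exact gw_congr (by ring) (by ring)

lemma gc_gw01 (h : r * u - s * t = 1) :
    (gc * gw 0 1 * gc⁻¹ : SapphireGroup r s t u) = gw (-(2*r*t)) (-(r*u+t*s)) := by
  calc (gc * gw 0 1 * gc⁻¹ : SapphireGroup r s t u)
      = (gc * gw t u * gc⁻¹) ^ r * (gc * gw r s * gc⁻¹) ^ (-t) := by
        rw [← conj_zpow', ← conj_zpow', gw01_decomp h]; group
    _ = (gw (-t) (-u)) ^ r * (gw r s) ^ (-t) := by rw [gconj3, gcw_rs]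
    _ = gw (-(2*r*t)) (-(r*u+t*s)) := by
        rw [gw_zpow, gw_zpow, gw_mul]; exact gw_congr (by ring) (by ring)

lemma gcw (h : r * u - s * t = 1) (i j : ℤ) :
    (gc * gw i j * gc⁻¹ : SapphireGroup r s t u)
      = gw ((r*u+t*s)*i - 2*r*t*j) (2*s*u*i - (r*u+t*s)*j) := by
  calc (gc * gw i j * gc⁻¹ : SapphireGroup r s t u)
      = (gc * gw 1 0 * gc⁻¹) ^ i * (gc * gw 0 1 * gc⁻¹) ^ j := by
        rw [← conj_zpow', ← conj_zpow', gw_split (i := i) (j := j)]; group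
    _ = (gw (r*u+t*s) (2*s*u)) ^ i * (gw (-(2*r*t)) (-(r*u+t*s))) ^ j := by
        rw [gc_gw10 h, gc_gw01 h]
    _ = gw ((r*u+t*s)*i - 2*r*t*j) (2*s*u*i - (r*u+t*s)*j) := by
        rw [gw_zpow, gw_zpow, gw_mul]; exact gw_congr (by ring) (by ring)

lemma gcinvw (h : r * u - s * t = 1) (i j : ℤ) :
    (gc⁻¹ * gw i j * gc : SapphireGroup r s t u)
      = gw ((r*u+t*s)*i - 2*r*t*j) (2*s*u*i - (r*u+t*s)*j) := by
  have := conj_of_conj (gcw h ((r*u+t*s)*i - 2*r*t*j) (2*s*u*i - (r*u+t*s)*j))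
  rw [← this]
  congr 1
  · congr 1
    exact (gw_congr (by linear_combination (i*(r*u-s*t)+i)*h) (by linear_combination (j*(r*u-s*t)+j)*h)).symm

end Sapphire

section Torus
variable {m n p q : ℤ}

def tα : TorusBundleGroup m n p q := PresentedGroup.of 0
def tβ : TorusBundleGroup m n p q := PresentedGroup.of 1
def tγ : TorusBundleGroup m n p q := PresentedGroup.of 2

def tw (i j : ℤ) : TorusBundleGroup m n p q := tα ^ i * tβ ^ j

lemma tw_congr {i j k l : ℤ} (h1 : i = k) (h2 : j = l) :
    (tw i j : TorusBundleGroup m n p q) = tw k l := by rw [h1, h2]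

lemma trel1 : (tα * tβ * tα⁻¹ * tβ⁻¹ : TorusBundleGroup m n p q) = 1 := by
  have := presented_rel (rels := torusBundleRels m n p q) (Set.mem_insert _ _)
  simp only [map_mul, map_inv] at this; exact this

lemma trel2 :
    (tγ * tα * tγ⁻¹ * tβ ^ (-p) * tα ^ (-m) : TorusBundleGroup m n p q) = 1 := by
  have := presented_rel (rels := torusBundleRels m n p q)
    (Set.mem_insert_of_mem _ (Set.mem_insert _ _))
  simp only [map_mul, map_inv, map_zpow] at this; exact this

lemma trel3 :
    (tγ * tβ * tγ⁻¹ * tβ ^ (-q) * tα ^ (-n) : TorusBundleGroup m n p q) = 1 := by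
  have := presented_rel (rels := torusBundleRels m n p q)
    (Set.mem_insert_of_mem _ (Set.mem_insert_of_mem _ rfl))
  simp only [map_mul, map_inv, map_zpow] at this; exact this

lemma tcomm : Commute (tα : TorusBundleGroup m n p q) tβ := by
  have : (tα * tβ : TorusBundleGroup m n p q) = tβ * tα := by
    calc (tα * tβ : TorusBundleGroup m n p q)
        = (tα * tβ * tα⁻¹ * tβ⁻¹) * (tβ * tα) := by group
      _ = tβ * tα := by rw [trel1]; group
  exact this

lemma tw_mul (i j k l : ℤ) : (tw i j * tw k l : TorusBundleGroup m n p q) = tw (i+k) (j+l) :=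
  wmul tcomm i j k l

lemma tw_zpow (i j nn : ℤ) : ((tw i j : TorusBundleGroup m n p q)) ^ nn = tw (i*nn) (j*nn) :=
  wzpow tcomm i j nn

lemma tw_inv (i j : ℤ) : ((tw i j : TorusBundleGroup m n p q))⁻¹ = tw (-i) (-j) := by
  have := tw_zpow (m := m) (n := n) (p := p) (q := q) i j (-1)
  simpa using this

lemma tw_one : (tw 0 0 : TorusBundleGroup m n p q) = 1 := by simp [tw]

lemma ta_tw (i : ℤ) : (tα ^ i : TorusBundleGroup m n p q) = tw i 0 := by simp [tw]

lemma tb_tw (j : ℤ) : (tβ ^ j : TorusBundleGroup m n p q) = tw 0 j := by simp [tw]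

lemma tconja : (tγ * tα * tγ⁻¹ : TorusBundleGroup m n p q) = tw m p := by
  calc (tγ * tα * tγ⁻¹ : TorusBundleGroup m n p q)
      = (tγ * tα * tγ⁻¹ * tβ ^ (-p) * tα ^ (-m)) * (tα ^ m * tβ ^ p) := by group
    _ = tα ^ m * tβ ^ p := by rw [trel2]; group
    _ = tw m p := by
        rw [ta_tw, tb_tw, tw_mul]; exact tw_congr (by ring) (by ring)

lemma tconjb : (tγ * tβ * tγ⁻¹ : TorusBundleGroup m n p q) = tw n q := by
  calc (tγ * tβ * tγ⁻¹ : TorusBundleGroup m n p q)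
      = (tγ * tβ * tγ⁻¹ * tβ ^ (-q) * tα ^ (-n)) * (tα ^ n * tβ ^ q) := by group
    _ = tα ^ n * tβ ^ q := by rw [trel3]; group
    _ = tw n q := by
        rw [ta_tw, tb_tw, tw_mul]; exact tw_congr (by ring) (by ring)

lemma tcw (i j : ℤ) :
    (tγ * tw i j * tγ⁻¹ : TorusBundleGroup m n p q) = tw (m*i+n*j) (p*i+q*j) := by
  calc (tγ * tw i j * tγ⁻¹ : TorusBundleGroup m n p q)
      = (tγ * tα * tγ⁻¹) ^ i * (tγ * tβ * tγ⁻¹) ^ j := by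
        rw [← conj_zpow', ← conj_zpow', tw]; group
    _ = (tw m p) ^ i * (tw n q) ^ j := by rw [tconja, tconjb]
    _ = tw (m*i+n*j) (p*i+q*j) := by
        rw [tw_zpow, tw_zpow, tw_mul]

lemma tcinvw (hdet : m * q - n * p = 1) (i j : ℤ) :
    (tγ⁻¹ * tw i j * tγ : TorusBundleGroup m n p q) = tw (q*i - n*j) (-(p*i) + m*j) := by
  have := conj_of_conj (tcw (m := m) (n := n) (p := p) (q := q) (q*i - n*j) (-(p*i) + m*j))
  rw [← this]
  congr 1
  congr 1
  exact (tw_congr (by linear_combination i*hdet) (by linear_combination j*hdet)).symm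

end Torus

section Sigma
variable {r s t u : ℤ}

local notation "TT" => TorusBundleGroup (r*u+t*s) (-(2*r*t)) (-(2*s*u)) (r*u+t*s)

lemma hdet' (h : r * u - s * t = 1) :
    (r*u+t*s)*(r*u+t*s) - (-(2*r*t))*(-(2*s*u)) = 1 := by
  linear_combination (r*u - s*t + 1) * h

lemma tinva (h : r * u - s * t = 1) :
    (tγ⁻¹ * tα * tγ : TT) = tw (r*u+t*s) (2*s*u) := by
  have h1 := tcinvw (hdet' h) 1 0
  rw [show (tw 1 0 : TT) = tα from by simp [tw]] at h1
  rw [h1]; exact tw_congr (by ring) (by ring)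

lemma tinvb (h : r * u - s * t = 1) :
    (tγ⁻¹ * tβ * tγ : TT) = tw (2*r*t) (r*u+t*s) := by
  have h1 := tcinvw (hdet' h) 0 1
  rw [show (tw 0 1 : TT) = tβ from by simp [tw]] at h1
  rw [h1]; exact tw_congr (by ring) (by ring)

def fsig : Fin 3 → TT := ![tα, tβ⁻¹, tw (1-r) (-s) * tγ⁻¹]

lemma fsig_rel (h : r * u - s * t = 1) :
    ∀ x ∈ torusBundleRels (r*u+t*s) (-(2*r*t)) (-(2*s*u)) (r*u+t*s),
      FreeGroup.lift (fsig (r := r) (s := s) (t := t) (u := u)) x = 1 := by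
  intro x hx
  simp only [torusBundleRels, Set.mem_insert_iff, Set.mem_singleton_iff] at hx
  rcases hx with rfl | rfl | rfl
  · simp only [map_mul, map_inv, map_zpow, FreeGroup.lift_apply_of, fsig,
      Matrix.cons_val_zero, Matrix.cons_val_one, Matrix.head_cons]
    rw [inv_inv, show (tα * tβ⁻¹ * tα⁻¹ * tβ : TT)
      = tβ⁻¹ * (tα * tβ * tα⁻¹ * tβ⁻¹)⁻¹ * tβ by group, trel1]
    group
  · simp only [map_mul, map_inv, map_zpow, FreeGroup.lift_apply_of, fsig,
      Matrix.cons_val_zero, Matrix.cons_val_one, Matrix.head_cons, Matrix.cons_val_two,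
      Matrix.tail_cons]
    calc (tw (1-r) (-s) * tγ⁻¹) * tα * (tw (1-r) (-s) * tγ⁻¹)⁻¹ *
          (tβ⁻¹) ^ (-(-(2*s*u))) * tα ^ (-(r*u+t*s))
        = tw (1-r) (-s) * (tγ⁻¹ * tα * tγ) * (tw (1-r) (-s))⁻¹ *
            tβ ^ (-(2*s*u)) * tα ^ (-(r*u+t*s)) := by group
      _ = tw (1-r) (-s) * tw (r*u+t*s) (2*s*u) * tw (-(1-r)) (-(-s)) *
            tw 0 (-(2*s*u)) * tw (-(r*u+t*s)) 0 := by
          rw [tinva h, tw_inv, ta_tw, tb_tw]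
      _ = tw 0 0 := by
          rw [tw_mul, tw_mul, tw_mul, tw_mul]; exact tw_congr (by ring) (by ring)
      _ = 1 := tw_one
  · simp only [map_mul, map_inv, map_zpow, FreeGroup.lift_apply_of, fsig,
      Matrix.cons_val_zero, Matrix.cons_val_one, Matrix.head_cons, Matrix.cons_val_two,
      Matrix.tail_cons]
    calc (tw (1-r) (-s) * tγ⁻¹) * tβ⁻¹ * (tw (1-r) (-s) * tγ⁻¹)⁻¹ *
          (tβ⁻¹) ^ (-(r*u+t*s)) * tα ^ (-(-(2*r*t)))
        = tw (1-r) (-s) * (tγ⁻¹ * tβ * tγ)⁻¹ * (tw (1-r) (-s))⁻¹ *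
            tβ ^ (r*u+t*s) * tα ^ (2*r*t) := by group
      _ = tw (1-r) (-s) * tw (-(2*r*t)) (-(r*u+t*s)) * tw (-(1-r)) (-(-s)) *
            tw 0 (r*u+t*s) * tw (2*r*t) 0 := by
          rw [tinvb h, tw_inv, tw_inv, ta_tw, tb_tw]
      _ = tw 0 0 := by
          rw [tw_mul, tw_mul, tw_mul, tw_mul]; exact tw_congr (by ring) (by ring)
      _ = 1 := tw_one

def sigma (h : r * u - s * t = 1) : TT →* TT := PresentedGroup.toGroup (fsig_rel h)

lemma sigma_a (h : r * u - s * t = 1) : sigma h (tα : TT) = tα :=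
  PresentedGroup.toGroup.of (fsig_rel h)

lemma sigma_b (h : r * u - s * t = 1) : sigma h (tβ : TT) = tβ⁻¹ :=
  PresentedGroup.toGroup.of (fsig_rel h)

lemma sigma_g (h : r * u - s * t = 1) :
    sigma h (tγ : TT) = tw (1-r) (-s) * tγ⁻¹ :=
  PresentedGroup.toGroup.of (fsig_rel h)

lemma sigma_tw (h : r * u - s * t = 1) (i j : ℤ) :
    sigma h (tw i j : TT) = tw i (-j) := by
  rw [tw, map_mul, map_zpow, map_zpow, sigma_a h, sigma_b h, inv_zpow, ← zpow_neg, tw]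

lemma sigma_sq (h : r * u - s * t = 1) :
    (sigma h).comp (sigma h) = (MulAut.conj (tα : TT)).toMonoidHom := by
  apply PresentedGroup.ext
  intro x
  fin_cases x
  · show sigma h (sigma h (tα : TT)) = MulAut.conj tα tα
    rw [sigma_a h, sigma_a h, MulAut.conj_apply]; group
  · show sigma h (sigma h (tβ : TT)) = MulAut.conj tα tβ
    rw [sigma_b h, map_inv, sigma_b h, inv_inv, MulAut.conj_apply]
    have := (tcomm (m := r*u+t*s) (n := -(2*r*t)) (p := -(2*s*u)) (q := r*u+t*s)).eq
    rw [this]; group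
  · show sigma h (sigma h (tγ : TT)) = MulAut.conj tα tγ
    rw [sigma_g h, map_mul, sigma_tw h, map_inv, sigma_g h, MulAut.conj_apply]
    have e1 : (tγ * tw (r-1) (-(-s)) : TT)
        = tw ((r*u+t*s)*(r-1) + (-(2*r*t))*(-(-s)))
            ((-(2*s*u))*(r-1) + (r*u+t*s)*(-(-s))) * tγ := by
      rw [← tcw]; group
    have e2 : (tγ * tα⁻¹ : TT)
        = tw ((r*u+t*s)*(-1) + (-(2*r*t))*0) ((-(2*s*u))*(-1) + (r*u+t*s)*0) * tγ := by
      rw [← tcw, show (tw (-1) 0 : TT) = tα⁻¹ from by simp [tw]]; group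
    calc tw (1-r) (-(-s)) * (tw (1-r) (-s) * tγ⁻¹)⁻¹
        = tw (1-r) (-(-s)) * (tγ * tw (-(1-r)) (-(-s))) := by
          rw [mul_inv_rev, inv_inv, tw_inv]
      _ = tw (1-r) (-(-s)) * (tγ * tw (r-1) (-(-s))) := by
          rw [show (-(1-r) : ℤ) = r-1 by ring]
      _ = (tw (1-r) (-(-s)) * tw ((r*u+t*s)*(r-1) + (-(2*r*t))*(-(-s)))
            ((-(2*s*u))*(r-1) + (r*u+t*s)*(-(-s)))) * tγ := by rw [e1]; group
      _ = tw (1 + ((r*u+t*s)*(-1) + (-(2*r*t))*0))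
            (0 + ((-(2*s*u))*(-1) + (r*u+t*s)*0)) * tγ := by
          rw [tw_mul]
          congr 1
          exact tw_congr (by linear_combination r*h) (by linear_combination (-s)*h)
      _ = tw 1 0 * (tw ((r*u+t*s)*(-1) + (-(2*r*t))*0)
            ((-(2*s*u))*(-1) + (r*u+t*s)*0) * tγ) := by rw [← mul_assoc, tw_mul]
      _ = tα * (tγ * tα⁻¹) := by
          rw [← e2, show (tw 1 0 : TT) = tα from by simp [tw]]
      _ = tα * tγ * tα⁻¹ := by group

def tauHom (h : r * u - s * t = 1) : TT →* TT :=
  (MulAut.conj (tα⁻¹ : TT)).toMonoidHom.comp (sigma h)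

lemma sigma_sigma (h : r * u - s * t = 1) (x : TT) :
    sigma h (sigma h x) = tα * x * tα⁻¹ := by
  have := DFunLike.congr_fun (sigma_sq h) x
  simpa [MulAut.conj_apply] using this

def sigmaEquiv (h : r * u - s * t = 1) : TT ≃* TT :=
  MonoidHom.toMulEquiv (sigma h) (tauHom h)
    (by
      apply MonoidHom.ext
      intro x
      show tα⁻¹ * sigma h (sigma h x) * tα⁻¹⁻¹ = x
      rw [sigma_sigma h]; group)
    (by
      apply MonoidHom.ext
      intro x
      show sigma h (tα⁻¹ * sigma h x * tα⁻¹⁻¹) = x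
      rw [map_mul, map_mul, map_inv, map_inv, map_inv, sigma_a h, sigma_sigma h]
      group)

lemma sigmaEquiv_apply (h : r * u - s * t = 1) (x : TT) : sigmaEquiv h x = sigma h x := rfl

end Sigma

section Ext
variable {r s t u : ℤ}

local notation "TT" => TorusBundleGroup (r*u+t*s) (-(2*r*t)) (-(2*s*u)) (r*u+t*s)

/-- The action of `ℤ` on `TT` by powers of `σ`. -/
def theta (h : r * u - s * t = 1) : Multiplicative ℤ →* MulAut TT :=
  zpowersHom (MulAut TT) (sigmaEquiv h)

/-- The extension `E = TT ⋊ ℤ`. -/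
abbrev EE (h : r * u - s * t = 1) := SemidirectProduct TT (Multiplicative ℤ) (theta h)

lemma theta_apply (h : r * u - s * t = 1) (k : ℤ) (x : TT) :
    theta h (Multiplicative.ofAdd k) x = ((sigmaEquiv h) ^ k) x := rfl

lemma theta_fix_a (h : r * u - s * t = 1) (k : Multiplicative ℤ) :
    theta h k (tα : TT) = tα :=
  aut_zpow_fix (sigmaEquiv h) (sigma_a h) (Multiplicative.toAdd k)

lemma theta_a_pow (h : r * u - s * t = 1) (k : Multiplicative ℤ) (l : ℤ) :
    theta h k ((tα : TT) ^ l) = tα ^ l := by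
  rw [map_zpow, theta_fix_a]

lemma theta_mul (h : r * u - s * t = 1) (k l : Multiplicative ℤ) (x : TT) :
    theta h k (theta h l x) = theta h (k * l) x := by
  rw [← MulAut.mul_apply, ← map_mul]

lemma theta_one' (h : r * u - s * t = 1) (x : TT) :
    theta h (Multiplicative.ofAdd 1) x = sigma h x := by
  rw [theta_apply, zpow_one]; rfl

lemma sigma_sq_aut (h : r * u - s * t = 1) :
    (sigmaEquiv h) ^ (2:ℤ) = MulAut.conj (tα : TT) := by
  have h2 : (sigmaEquiv h) ^ (2:ℤ) = sigmaEquiv h * sigmaEquiv h := zpow_two _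
  apply DFunLike.ext
  intro x
  rw [h2, MulAut.mul_apply, MulAut.conj_apply]
  exact sigma_sigma h x

lemma theta_even (h : r * u - s * t = 1) (j : ℤ) (x : TT) :
    theta h (Multiplicative.ofAdd (2*j)) x = tα ^ j * x * tα ^ (-j) := by
  rw [theta_apply, zpow_mul, sigma_sq_aut h, ← map_zpow (MulAut.conj),
    MulAut.conj_apply, zpow_neg]

lemma theta_odd (h : r * u - s * t = 1) (j : ℤ) (x : TT) :
    theta h (Multiplicative.ofAdd (2*j+1)) x = tα ^ j * sigma h x * tα ^ (-j) := by
  have e : Multiplicative.ofAdd (2*j+1)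
      = Multiplicative.ofAdd (2*j) * Multiplicative.ofAdd (1:ℤ) := by
    rw [← ofAdd_add]
  rw [e, ← theta_mul, theta_one' h, theta_even h]

lemma tab_sandwich {m n p q : ℤ} (j l : ℤ) :
    (tα ^ j * tβ ^ l * tα ^ (-j) : TorusBundleGroup m n p q) = tβ ^ l := by
  rw [ta_tw, tb_tw, ta_tw (-j), mul_assoc, tw_mul, tw_mul]
  exact tw_congr (by ring) (by ring)

lemma theta_even_b (h : r * u - s * t = 1) (j l : ℤ) :
    theta h (Multiplicative.ofAdd (2*j)) ((tβ : TT) ^ l) = tβ ^ l := by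
  rw [theta_even h, tab_sandwich]

lemma theta_odd_b (h : r * u - s * t = 1) (j l : ℤ) :
    theta h (Multiplicative.ofAdd (2*j+1)) ((tβ : TT) ^ l) = tβ ^ (-l) := by
  rw [theta_odd h, map_zpow, sigma_b h, inv_zpow, ← zpow_neg, tab_sandwich]

lemma theta_one_el (h : r * u - s * t = 1) (k : Multiplicative ℤ) :
    theta h k (1 : TT) = 1 := map_one _

/-- The central element `z₀ = (α⁻¹, 2)`. -/
def z0 (h : r * u - s * t = 1) : EE h := ⟨tα⁻¹, Multiplicative.ofAdd (2:ℤ)⟩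

lemma mk_mul (h : r * u - s * t = 1) (x y : TT) (k l : Multiplicative ℤ) :
    (⟨x, k⟩ * ⟨y, l⟩ : EE h) = ⟨x * theta h k y, k * l⟩ := rfl

lemma mk_inv (h : r * u - s * t = 1) (x : TT) (k : Multiplicative ℤ) :
    (⟨x, k⟩ : EE h)⁻¹ = ⟨theta h k⁻¹ x⁻¹, k⁻¹⟩ := rfl

lemma om_pow (k : ℤ) : (Multiplicative.ofAdd (1:ℤ)) ^ k = Multiplicative.ofAdd k := by
  rw [← ofAdd_zsmul]
  norm_num

lemma inr_om1_pow (h : r * u - s * t = 1) (l : ℤ) :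
    ((SemidirectProduct.inr (Multiplicative.ofAdd (1:ℤ)) : EE h)) ^ l
      = SemidirectProduct.inr (Multiplicative.ofAdd l) := by
  rw [← map_zpow (SemidirectProduct.inr (φ := theta h)), om_pow]

lemma inl_zpow (h : r * u - s * t = 1) (x : TT) (l : ℤ) :
    ((SemidirectProduct.inl x : EE h)) ^ l = SemidirectProduct.inl (x ^ l) :=
  (map_zpow (SemidirectProduct.inl (φ := theta h)) x l).symm

lemma om_pow2 (k : ℤ) : (Multiplicative.ofAdd (2:ℤ)) ^ k = Multiplicative.ofAdd (2*k) := by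
  rw [← ofAdd_zsmul]
  congr 1
  rw [smul_eq_mul]
  ring

lemma z0_zpow (h : r * u - s * t = 1) (k : ℤ) :
    z0 h ^ k = (⟨tα ^ (-k), Multiplicative.ofAdd (2*k)⟩ : EE h) := by
  have h2 : theta h (Multiplicative.ofAdd (2:ℤ)) (tα⁻¹ : TT) = tα⁻¹ := by
    rw [map_inv, theta_fix_a]
  have hcomm : Commute (SemidirectProduct.inl (tα⁻¹ : TT) : EE h)
      (SemidirectProduct.inr (Multiplicative.ofAdd (2:ℤ))) := by
    show _ = _
    calc (SemidirectProduct.inl (tα⁻¹ : TT) : EE h) *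
          SemidirectProduct.inr (Multiplicative.ofAdd (2:ℤ))
        = (SemidirectProduct.inl (theta h (Multiplicative.ofAdd (2:ℤ)) (tα⁻¹ : TT)) : EE h) *
            SemidirectProduct.inr (Multiplicative.ofAdd (2:ℤ)) := by rw [h2]
      _ = ((SemidirectProduct.inr (Multiplicative.ofAdd (2:ℤ)) : EE h) *
            SemidirectProduct.inl (tα⁻¹:TT) *
            SemidirectProduct.inr ((Multiplicative.ofAdd (2:ℤ))⁻¹)) *
            SemidirectProduct.inr (Multiplicative.ofAdd (2:ℤ)) := by
          rw [SemidirectProduct.inl_aut, map_inv]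
      _ = SemidirectProduct.inr (Multiplicative.ofAdd (2:ℤ)) *
            SemidirectProduct.inl (tα⁻¹:TT) := by
          rw [map_inv (SemidirectProduct.inr : Multiplicative ℤ →* EE h)
            (Multiplicative.ofAdd (2:ℤ))]
          group
  calc z0 h ^ k
      = ((SemidirectProduct.inl (tα⁻¹ : TT) : EE h) *
          SemidirectProduct.inr (Multiplicative.ofAdd (2:ℤ))) ^ k := by
        rw [show z0 h = (⟨tα⁻¹, Multiplicative.ofAdd (2:ℤ)⟩ : EE h) from rfl,
          SemidirectProduct.mk_eq_inl_mul_inr]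
    _ = (SemidirectProduct.inl ((tα⁻¹ : TT) ^ k) : EE h) *
          SemidirectProduct.inr ((Multiplicative.ofAdd (2:ℤ)) ^ k) := by
        rw [hcomm.mul_zpow, map_zpow, map_zpow]
    _ = (⟨tα ^ (-k), Multiplicative.ofAdd (2*k)⟩ : EE h) := by
        rw [inv_zpow, ← zpow_neg, om_pow2, SemidirectProduct.mk_eq_inl_mul_inr]

lemma z0_central (h : r * u - s * t = 1) (g : EE h) : g * z0 h = z0 h * g := by
  apply SemidirectProduct.ext
  · show g.left * theta h g.right (tα⁻¹ : TT)
      = tα⁻¹ * theta h (Multiplicative.ofAdd (2:ℤ)) g.left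
    rw [map_inv, theta_fix_a, show (Multiplicative.ofAdd (2:ℤ))
      = Multiplicative.ofAdd (2*1) from by norm_num, theta_even h]
    group
  · show g.right * Multiplicative.ofAdd (2:ℤ) = Multiplicative.ofAdd (2:ℤ) * g.right
    exact mul_comm _ _

/-- The central subgroup generated by `z₀`. -/
def NN (h : r * u - s * t = 1) : Subgroup (EE h) := Subgroup.zpowers (z0 h)

instance NN_normal (h : r * u - s * t = 1) : (NN h).Normal := by
  constructor
  intro x hx g
  obtain ⟨k, rfl⟩ := Subgroup.mem_zpowers_iff.mp hx
  have hc : Commute g (z0 h) := z0_central h g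
  have e : g * z0 h ^ k * g⁻¹ = z0 h ^ k := by
    rw [(hc.zpow_right k).eq]; group
  rw [e]
  exact Subgroup.zpow_mem _ (Subgroup.mem_zpowers _) k

/-- The quotient `E/⟨z₀⟩`. -/
abbrev QQ (h : r * u - s * t = 1) := EE h ⧸ NN h

/-- `(γ⁻¹, 1) : E`. -/
def z2 (h : r * u - s * t = 1) : EE h := ⟨tγ⁻¹, Multiplicative.ofAdd (1:ℤ)⟩

lemma e_rel1 (h : r * u - s * t = 1) :
    ((SemidirectProduct.inr (Multiplicative.ofAdd (1:ℤ)) : EE h) * SemidirectProduct.inl tβ *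
      (SemidirectProduct.inr (Multiplicative.ofAdd (1:ℤ)))⁻¹ * SemidirectProduct.inl tβ)
      = 1 := by
  rw [← map_inv, ← SemidirectProduct.inl_aut, theta_one' h, sigma_b h, ← map_mul,
    inv_mul_cancel, map_one]

lemma e_rel2 (h : r * u - s * t = 1) :
    (z2 h ^ (2:ℤ) * SemidirectProduct.inr (Multiplicative.ofAdd (1:ℤ)) ^ (-(2*r)) *
      SemidirectProduct.inl tβ ^ (-s) : EE h) = z0 h ^ (1-r) := by
  have hz2' : z2 h ^ (2:ℤ) = z2 h * z2 h := zpow_two _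
  have hz2 : z2 h ^ (2:ℤ) = (⟨tw (r-1) (-(-s)), Multiplicative.ofAdd (2:ℤ)⟩ : EE h) := by
    rw [hz2', show z2 h = (⟨tγ⁻¹, Multiplicative.ofAdd (1:ℤ)⟩ : EE h) from rfl, mk_mul,
      theta_one' h, map_inv, sigma_g h]
    apply SemidirectProduct.ext
    · show tγ⁻¹ * (tw (1-r) (-s) * tγ⁻¹)⁻¹ = tw (r-1) (-(-s))
      rw [mul_inv_rev, inv_inv, tw_inv, ← mul_assoc]
      rw [show (tγ⁻¹ * tγ : TT) = 1 from by group, one_mul]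
      exact tw_congr (by ring) rfl
    · show Multiplicative.ofAdd (1:ℤ) * Multiplicative.ofAdd (1:ℤ) = Multiplicative.ofAdd (2:ℤ)
      rw [← ofAdd_add]; norm_num
  rw [hz2, inr_om1_pow h, inl_zpow h, z0_zpow]
  rw [show (SemidirectProduct.inr (Multiplicative.ofAdd (-(2*r))) : EE h)
    = ⟨1, Multiplicative.ofAdd (-(2*r))⟩ from rfl]
  rw [show (SemidirectProduct.inl ((tβ:TT) ^ (-s)) : EE h) = ⟨tβ ^ (-s), 1⟩ from rfl]
  rw [mk_mul, mk_mul]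
  apply SemidirectProduct.ext
  · dsimp only
    simp only [theta_one_el, mul_one]
    rw [← ofAdd_add, show (2 + -(2*r) : ℤ) = 2*(1-r) from by ring, theta_even_b h,
      tb_tw, tw_mul, ta_tw]
    exact tw_congr (by ring) (by ring)
  · dsimp only
    simp only [mul_one]
    rw [← ofAdd_add]
    congr 1
    ring

lemma key3 (h : r * u - s * t = 1) :
    (tγ⁻¹ * tβ ^ (-u) * (tα ^ t * tγ * tα ^ (-t)) * tβ ^ u : TT) = tα ^ (-(2*t)) := by
  have hc := tcinvw (hdet' h) t (-u)
  have hc' : (tγ⁻¹ * tw t (-u) * tγ : TT) = tw (-t) (-u) := by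
    rw [hc]; exact tw_congr (by linear_combination (-t)*h) (by linear_combination (-u)*h)
  have hswap : (tβ ^ (-u) * tα ^ t : TT) = tw t (-u) := by
    rw [tw, ← ((tcomm.symm).zpow_zpow (-u) t).eq]
  calc (tγ⁻¹ * tβ ^ (-u) * (tα ^ t * tγ * tα ^ (-t)) * tβ ^ u : TT)
      = tγ⁻¹ * (tβ ^ (-u) * tα ^ t) * tγ * (tα ^ (-t) * tβ ^ u) := by group
    _ = (tγ⁻¹ * tw t (-u) * tγ) * (tα ^ (-t) * tβ ^ u) := by rw [hswap]
    _ = tw (-t) (-u) * tw (-t+0) (0+u) := by rw [hc', ta_tw, tb_tw, tw_mul]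
    _ = tα ^ (-(2*t)) := by rw [tw_mul, ta_tw]; exact tw_congr (by ring) (by ring)

lemma e_rel3 (h : r * u - s * t = 1) :
    (z2 h * SemidirectProduct.inr (Multiplicative.ofAdd (1:ℤ)) ^ (2*t) *
      SemidirectProduct.inl tβ ^ u * (z2 h)⁻¹ *
      SemidirectProduct.inr (Multiplicative.ofAdd (1:ℤ)) ^ (2*t) *
      SemidirectProduct.inl tβ ^ u : EE h) = z0 h ^ (2*t) := by
  rw [inr_om1_pow h, inl_zpow h, z0_zpow]
  rw [show (SemidirectProduct.inr (Multiplicative.ofAdd (2*t)) : EE h)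
    = ⟨1, Multiplicative.ofAdd (2*t)⟩ from rfl]
  rw [show (SemidirectProduct.inl ((tβ:TT) ^ u) : EE h) = ⟨tβ ^ u, 1⟩ from rfl]
  rw [show z2 h = (⟨tγ⁻¹, Multiplicative.ofAdd (1:ℤ)⟩ : EE h) from rfl, mk_inv,
    mk_mul, mk_mul, mk_mul, mk_mul, mk_mul]
  apply SemidirectProduct.ext
  · dsimp only
    simp only [theta_one_el, mul_one, inv_inv]
    rw [theta_mul h]
    rw [show (Multiplicative.ofAdd (1:ℤ) * Multiplicative.ofAdd (2*t) : Multiplicative ℤ)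
      = Multiplicative.ofAdd (2*t+1) from by rw [← ofAdd_add]; congr 1; ring]
    rw [show (Multiplicative.ofAdd (2*t+1) * (Multiplicative.ofAdd (1:ℤ))⁻¹ : Multiplicative ℤ)
      = Multiplicative.ofAdd (2*t) from by
        rw [← ofAdd_neg, ← ofAdd_add]; congr 1; ring]
    rw [show (Multiplicative.ofAdd (2*t) * Multiplicative.ofAdd (2*t) : Multiplicative ℤ)
      = Multiplicative.ofAdd (2*(2*t)) from by rw [← ofAdd_add]; congr 1; ring]
    rw [theta_odd_b h t u, theta_even h t tγ, theta_even_b h (2*t) u]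
    exact key3 h
  · dsimp only
    simp only [mul_one]
    rw [show (Multiplicative.ofAdd (1:ℤ) * Multiplicative.ofAdd (2*t) : Multiplicative ℤ)
      = Multiplicative.ofAdd (2*t+1) from by rw [← ofAdd_add]; congr 1; ring]
    rw [show (Multiplicative.ofAdd (2*t+1) * (Multiplicative.ofAdd (1:ℤ))⁻¹ : Multiplicative ℤ)
      = Multiplicative.ofAdd (2*t) from by
        rw [← ofAdd_neg, ← ofAdd_add]; congr 1; ring]
    rw [← ofAdd_add]
    congr 1
    ring

end Ext

section Maps
variable {r s t u : ℤ}

local notation "TT" => TorusBundleGroup (r*u+t*s) (-(2*r*t)) (-(2*s*u)) (r*u+t*s)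
local notation "GG" => SapphireGroup r s t u

lemma gw_inv (i j : ℤ) : ((gw i j : GG))⁻¹ = gw (-i) (-j) := by
  have := gw_zpow (r := r) (s := s) (t := t) (u := u) i j (-1)
  simpa using this

lemma gw_one : (gw 0 0 : GG) = 1 := by simp [gw]

lemma gb_gw1 : (gb : GG) = gw 0 1 := by simp [gw]

lemma gb_zpow (j : ℤ) : ((gb : GG)) ^ j = gw 0 j := by simp [gw]

lemma gw10_eq : (gw 1 0 : GG) = ga * ga := by
  rw [gw, zpow_one, zpow_zero, mul_one, zpow_two]

def fpsi : Fin 3 → GG := ![gw 1 0, gb, ga * gc⁻¹]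

lemma fpsi_rel (h : r * u - s * t = 1) :
    ∀ x ∈ torusBundleRels (r*u+t*s) (-(2*r*t)) (-(2*s*u)) (r*u+t*s),
      FreeGroup.lift (fpsi (r := r) (s := s) (t := t) (u := u)) x = 1 := by
  intro x hx
  simp only [torusBundleRels, Set.mem_insert_iff, Set.mem_singleton_iff] at hx
  rcases hx with rfl | rfl | rfl
  · simp only [map_mul, map_inv, map_zpow, FreeGroup.lift_apply_of, fpsi,
      Matrix.cons_val_zero, Matrix.cons_val_one, Matrix.head_cons]
    rw [gb_gw1, gw_inv, gw_inv, gw_mul, gw_mul, gw_mul]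
    exact (gw_congr (by ring) (by ring)).trans gw_one
  · simp only [map_mul, map_inv, map_zpow, FreeGroup.lift_apply_of, fpsi,
      Matrix.cons_val_zero, Matrix.cons_val_one, Matrix.head_cons, Matrix.cons_val_two,
      Matrix.tail_cons]
    calc ((ga * gc⁻¹) * gw 1 0 * (ga * gc⁻¹)⁻¹ * gb ^ (-(-(2*s*u))) *
          (gw 1 0) ^ (-(r*u+t*s)) : GG)
        = ga * (gc⁻¹ * gw 1 0 * gc) * ga⁻¹ *
            (gb ^ (2*s*u) * (gw 1 0) ^ (-(r*u+t*s))) := by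
          rw [mul_inv_rev, inv_inv]; group
      _ = gw ((r*u+t*s)*1 - 2*r*t*0) (-(2*s*u*1 - (r*u+t*s)*0)) *
            (gw 0 (2*s*u) * gw (1*(-(r*u+t*s))) (0*(-(r*u+t*s)))) := by
          rw [gcinvw h, ha_gw, gb_zpow, gw_zpow]
      _ = 1 := by
          rw [gw_mul, gw_mul]
          exact (gw_congr (by ring) (by ring)).trans gw_one
  · simp only [map_mul, map_inv, map_zpow, FreeGroup.lift_apply_of, fpsi,
      Matrix.cons_val_zero, Matrix.cons_val_one, Matrix.head_cons, Matrix.cons_val_two,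
      Matrix.tail_cons]
    calc ((ga * gc⁻¹) * gb * (ga * gc⁻¹)⁻¹ * gb ^ (-(r*u+t*s)) * (gw 1 0) ^ (-(-(2*r*t))) : GG)
        = ga * (gc⁻¹ * gw 0 1 * gc) * ga⁻¹ *
            ((gw 0 1) ^ (-(r*u+t*s)) * (gw 1 0) ^ (2*r*t)) := by
          rw [gb_gw1, mul_inv_rev, inv_inv]; group
      _ = gw ((r*u+t*s)*0 - 2*r*t*1) (-(2*s*u*0 - (r*u+t*s)*1)) *
            (gw (0*(-(r*u+t*s))) (1*(-(r*u+t*s))) * gw (1*(2*r*t)) (0*(2*r*t))) := by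
          rw [gcinvw h, ha_gw, gw_zpow, gw_zpow]
      _ = 1 := by
          rw [gw_mul, gw_mul]
          exact (gw_congr (by ring) (by ring)).trans gw_one

/-- The map `T → G`, `α ↦ a², β ↦ b, γ ↦ a c⁻¹`. -/
def Psi (h : r * u - s * t = 1) : TT →* GG := PresentedGroup.toGroup (fpsi_rel h)

lemma psi_a (h : r * u - s * t = 1) : Psi h (tα : TT) = gw 1 0 :=
  PresentedGroup.toGroup.of (fpsi_rel h)

lemma psi_b (h : r * u - s * t = 1) : Psi h (tβ : TT) = gb :=
  PresentedGroup.toGroup.of (fpsi_rel h)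

lemma psi_g (h : r * u - s * t = 1) : Psi h (tγ : TT) = ga * gc⁻¹ :=
  PresentedGroup.toGroup.of (fpsi_rel h)

lemma psi_tw (h : r * u - s * t = 1) (i j : ℤ) : Psi h (tw i j : TT) = gw i j := by
  rw [tw, map_mul, map_zpow, map_zpow, psi_a, psi_b, gw_zpow, gb_zpow, gw_mul]
  exact gw_congr (by ring) (by ring)

def fphi (h : r * u - s * t = 1) : Fin 3 → QQ h :=
  ![(QuotientGroup.mk' (NN h)) (SemidirectProduct.inr (Multiplicative.ofAdd (1:ℤ))),
    (QuotientGroup.mk' (NN h)) (SemidirectProduct.inl tβ),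
    (QuotientGroup.mk' (NN h)) (z2 h)]

lemma fphi_rel (h : r * u - s * t = 1) :
    ∀ x ∈ sapphireRels r s t u, FreeGroup.lift (fphi h) x = 1 := by
  intro x hx
  simp only [sapphireRels, Set.mem_insert_iff, Set.mem_singleton_iff] at hx
  rcases hx with rfl | rfl | rfl
  · simp only [map_mul, map_inv, map_zpow, FreeGroup.lift_apply_of, fphi,
      Matrix.cons_val_zero, Matrix.cons_val_one, Matrix.head_cons]
    rw [← map_inv, ← map_mul, ← map_mul, ← map_mul, e_rel1 h, map_one]
  · simp only [map_mul, map_inv, map_zpow, FreeGroup.lift_apply_of, fphi,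
      Matrix.cons_val_zero, Matrix.cons_val_one, Matrix.head_cons, Matrix.cons_val_two,
      Matrix.tail_cons]
    rw [← map_zpow (QuotientGroup.mk' (NN h)), ← map_zpow (QuotientGroup.mk' (NN h)),
      ← map_zpow (QuotientGroup.mk' (NN h)), ← map_mul, ← map_mul, e_rel2 h]
    exact (QuotientGroup.eq_one_iff _).2 (Subgroup.zpow_mem _ (Subgroup.mem_zpowers _) _)
  · simp only [map_mul, map_inv, map_zpow, FreeGroup.lift_apply_of, fphi,
      Matrix.cons_val_zero, Matrix.cons_val_one, Matrix.head_cons, Matrix.cons_val_two,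
      Matrix.tail_cons]
    rw [← map_zpow (QuotientGroup.mk' (NN h)), ← map_zpow (QuotientGroup.mk' (NN h)),
      ← map_inv (QuotientGroup.mk' (NN h)), ← map_mul, ← map_mul,
      ← map_mul, ← map_mul, ← map_mul, e_rel3 h]
    exact (QuotientGroup.eq_one_iff _).2 (Subgroup.zpow_mem _ (Subgroup.mem_zpowers _) _)

/-- The map `G → E/⟨z₀⟩`. -/
def Phi (h : r * u - s * t = 1) : GG →* QQ h := PresentedGroup.toGroup (fphi_rel h)

lemma phi_a (h : r * u - s * t = 1) :
    Phi h (ga : GG)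
      = (QuotientGroup.mk' (NN h)) (SemidirectProduct.inr (Multiplicative.ofAdd (1:ℤ))) :=
  PresentedGroup.toGroup.of (fphi_rel h)

lemma phi_b (h : r * u - s * t = 1) :
    Phi h (gb : GG) = (QuotientGroup.mk' (NN h)) (SemidirectProduct.inl tβ) :=
  PresentedGroup.toGroup.of (fphi_rel h)

lemma phi_c (h : r * u - s * t = 1) :
    Phi h (gc : GG) = (QuotientGroup.mk' (NN h)) (z2 h) :=
  PresentedGroup.toGroup.of (fphi_rel h)

lemma theta_one_aut (h : r * u - s * t = 1) (x : TT) : theta h 1 x = x := by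
  rw [map_one]; rfl

lemma phi_psi (h : r * u - s * t = 1) :
    (Phi h).comp (Psi h) = (QuotientGroup.mk' (NN h)).comp SemidirectProduct.inl := by
  apply PresentedGroup.ext
  intro x
  fin_cases x
  · show Phi h (Psi h (tα : TT)) = (QuotientGroup.mk' (NN h)) (SemidirectProduct.inl (tα : TT))
    rw [psi_a h, gw10_eq, map_mul, phi_a h, ← map_mul]
    rw [show (SemidirectProduct.inr (Multiplicative.ofAdd (1:ℤ)) *
        SemidirectProduct.inr (Multiplicative.ofAdd (1:ℤ)) : EE h)
      = SemidirectProduct.inl (tα : TT) * z0 h from by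
        rw [← map_mul, ← ofAdd_add]
        rw [show (SemidirectProduct.inl (tα : TT) : EE h) = ⟨tα, 1⟩ from rfl,
          show z0 h = (⟨tα⁻¹, Multiplicative.ofAdd (2:ℤ)⟩ : EE h) from rfl, mk_mul]
        apply SemidirectProduct.ext
        · show (1 : TT) = tα * theta h 1 tα⁻¹
          rw [theta_one_aut h]; group
        · show Multiplicative.ofAdd ((1:ℤ)+1) = 1 * Multiplicative.ofAdd (2:ℤ)
          rw [one_mul]; norm_num]
    rw [map_mul]
    have : (QuotientGroup.mk' (NN h)) (z0 h) = 1 :=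
      (QuotientGroup.eq_one_iff _).2 (Subgroup.mem_zpowers _)
    rw [this, mul_one]
  · show Phi h (Psi h (tβ : TT)) = (QuotientGroup.mk' (NN h)) (SemidirectProduct.inl (tβ : TT))
    rw [psi_b h, phi_b h]
  · show Phi h (Psi h (tγ : TT)) = (QuotientGroup.mk' (NN h)) (SemidirectProduct.inl (tγ : TT))
    rw [psi_g h, map_mul, map_inv, phi_a h, phi_c h, ← map_inv, ← map_mul]
    congr 1
    rw [show (SemidirectProduct.inr (Multiplicative.ofAdd (1:ℤ)) : EE h)
      = ⟨1, Multiplicative.ofAdd (1:ℤ)⟩ from rfl,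
      show z2 h = (⟨tγ⁻¹, Multiplicative.ofAdd (1:ℤ)⟩ : EE h) from rfl, mk_inv, mk_mul]
    apply SemidirectProduct.ext
    · show (1:TT) * theta h (Multiplicative.ofAdd (1:ℤ))
        (theta h (Multiplicative.ofAdd (1:ℤ))⁻¹ (tγ⁻¹)⁻¹) = tγ
      rw [one_mul, inv_inv, theta_mul h, mul_inv_cancel, theta_one_aut h]
    · show Multiplicative.ofAdd (1:ℤ) * (Multiplicative.ofAdd (1:ℤ))⁻¹ = 1
      rw [mul_inv_cancel]

lemma psi_inj (h : r * u - s * t = 1) : Function.Injective (Psi h) := by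
  intro x y hxy
  have e1 := DFunLike.congr_fun (phi_psi h) x
  have e2 := DFunLike.congr_fun (phi_psi h) y
  simp only [MonoidHom.comp_apply] at e1 e2
  have h2 : (QuotientGroup.mk' (NN h)) (SemidirectProduct.inl x)
      = (QuotientGroup.mk' (NN h)) (SemidirectProduct.inl y) := by
    rw [← e1, ← e2, hxy]
  rw [QuotientGroup.mk'_eq_mk'] at h2
  obtain ⟨z, hz, hzeq⟩ := h2
  obtain ⟨k, rfl⟩ := Subgroup.mem_zpowers_iff.mp hz
  rw [z0_zpow] at hzeq
  have hr := congrArg SemidirectProduct.right hzeq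
  have hk : (2*k : ℤ) = 0 := by
    have h' : (1 : Multiplicative ℤ) * Multiplicative.ofAdd (2*k) = 1 := hr
    rw [one_mul] at h'
    simpa using congrArg Multiplicative.toAdd h'
  have hk0 : k = 0 := by omega
  subst hk0
  have hzeq' : SemidirectProduct.inl x = SemidirectProduct.inl (φ := theta h) y := by
    rw [← hzeq]
    rw [show ((⟨tα ^ (-(0:ℤ)), Multiplicative.ofAdd (2*(0:ℤ))⟩ : EE h)) = 1 from by
      apply SemidirectProduct.ext <;> simp]
    rw [mul_one]
  exact SemidirectProduct.inl_injective hzeq'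

lemma conj_psi (h : r * u - s * t = 1) :
    (MulAut.conj (ga : GG)).toMonoidHom.comp (Psi h) = (Psi h).comp (sigma h) := by
  apply PresentedGroup.ext
  intro x
  fin_cases x
  · show ga * Psi h (tα : TT) * ga⁻¹ = Psi h (sigma h (tα : TT))
    rw [sigma_a h, psi_a h, ha_gw]
    exact gw_congr rfl (by norm_num)
  · show ga * Psi h (tβ : TT) * ga⁻¹ = Psi h (sigma h (tβ : TT))
    rw [sigma_b h, psi_b h, map_inv, psi_b h, hab]
  · show ga * Psi h (tγ : TT) * ga⁻¹ = Psi h (sigma h (tγ : TT))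
    rw [sigma_g h, psi_g h, map_mul, map_inv, psi_tw h, psi_g h]
    calc ga * (ga * gc⁻¹) * ga⁻¹
        = gw 1 0 * gc⁻¹ * ga⁻¹ := by rw [gw10_eq]; group
      _ = gw (1-r) (-s) * gw r s * gc⁻¹ * ga⁻¹ := by
          rw [show (gw 1 0 : GG) = gw (1-r) (-s) * gw r s from by
            rw [gw_mul]; exact gw_congr (by ring) (by ring)]
      _ = gw (1-r) (-s) * (gc ^ (2:ℤ) * gc⁻¹) * ga⁻¹ := by rw [gc2]; group
      _ = gw (1-r) (-s) * (ga * gc⁻¹)⁻¹ := by group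

lemma conj_psi_mem (h : r * u - s * t = 1) (x : TT) :
    ga⁻¹ * (Psi h x) * ga ∈ (Psi h).range := by
  have e := DFunLike.congr_fun (conj_psi h) ((sigmaEquiv h).symm x)
  simp only [MonoidHom.comp_apply, MulEquiv.coe_toMonoidHom, MulAut.conj_apply] at e
  have e2 : sigma h ((sigmaEquiv h).symm x) = x := (sigmaEquiv h).apply_symm_apply x
  rw [e2] at e
  have := conj_of_conj e
  rw [this]
  exact ⟨_, rfl⟩

lemma cover (h : r * u - s * t = 1) (g : GG) :
    g ∈ (Psi h).range ∨ ga⁻¹ * g ∈ (Psi h).range := by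
  refine PresentedGroup.induction_on
    (C := fun g => g ∈ (Psi h).range ∨ ga⁻¹ * g ∈ (Psi h).range) g ?_
  intro z
  induction z using FreeGroup.induction_on with
  | C1 => left; rw [map_one]; exact one_mem _
  | of x =>
    fin_cases x
    · right
      show ga⁻¹ * (ga : GG) ∈ (Psi h).range
      rw [inv_mul_cancel]
      exact one_mem _
    · left
      show (gb : GG) ∈ (Psi h).range
      exact ⟨tβ, psi_b h⟩
    · right
      show ga⁻¹ * (gc : GG) ∈ (Psi h).range
      refine ⟨tα⁻¹ * tγ * (tα ^ r * tβ ^ s), ?_⟩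
      rw [map_mul, map_mul, map_mul, map_inv, map_zpow, map_zpow, psi_a h, psi_g h,
        psi_b h, gw_zpow, gb_zpow]
      calc (gw 1 0)⁻¹ * (ga * gc⁻¹) * (gw (1*r) (0*r) * gw 0 s)
          = (gw 1 0)⁻¹ * (ga * gc⁻¹) * gw r s := by
            rw [gw_mul]; congr 1; exact gw_congr (by ring) (by ring)
        _ = (gw 1 0)⁻¹ * (ga * gc⁻¹) * gc ^ (2:ℤ) := by rw [gc2]
        _ = ga⁻¹ * gc := by rw [gw10_eq]; group
  | inv_of x ih =>
    clear ih
    fin_cases x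
    · right
      show ga⁻¹ * ((PresentedGroup.mk (sapphireRels r s t u)) (FreeGroup.of 0))⁻¹ ∈ (Psi h).range
      show ga⁻¹ * (ga : GG)⁻¹ ∈ (Psi h).range
      refine ⟨tα⁻¹, ?_⟩
      rw [map_inv, psi_a h, gw10_eq]
      group
    · left
      show (((PresentedGroup.mk (sapphireRels r s t u)) (FreeGroup.of 1))⁻¹ : GG) ∈ (Psi h).range
      show ((gb : GG))⁻¹ ∈ (Psi h).range
      exact ⟨tβ⁻¹, by rw [map_inv, psi_b h]⟩
    · right
      show ga⁻¹ * ((PresentedGroup.mk (sapphireRels r s t u)) (FreeGroup.of 2))⁻¹ ∈ (Psi h).range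
      show ga⁻¹ * (gc : GG)⁻¹ ∈ (Psi h).range
      refine ⟨tα⁻¹ * tγ, ?_⟩
      rw [map_mul, map_inv, psi_a h, psi_g h, gw10_eq]
      group
  | mul x y ihx ihy =>
    rw [map_mul]
    set X := PresentedGroup.mk (sapphireRels r s t u) x with hX
    set Y := PresentedGroup.mk (sapphireRels r s t u) y with hY
    rcases ihx with hx | hx <;> rcases ihy with hy | hy
    · left; exact mul_mem hx hy
    · right
      obtain ⟨xx, hxx⟩ := hx
      have : ga⁻¹ * (X * Y) = (ga⁻¹ * Psi h xx * ga) * (ga⁻¹ * Y) := by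
        rw [hxx]; group
      rw [this]
      exact mul_mem (conj_psi_mem h xx) hy
    · right
      have : ga⁻¹ * (X * Y) = (ga⁻¹ * X) * Y := by group
      rw [this]
      exact mul_mem hx hy
    · left
      obtain ⟨xx, hxx⟩ := hx
      have : X * Y = gw 1 0 * (ga⁻¹ * Psi h xx * ga) * (ga⁻¹ * Y) := by
        rw [hxx, gw10_eq]; group
      rw [this]
      exact mul_mem (mul_mem ⟨tα, psi_a h⟩ (conj_psi_mem h xx)) hy

end Maps
end Stmt4Aux

open Stmt4Aux

theorem stmt4 (r s t u : ℤ) (h : r * u - s * t = 1)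
    (φ : SapphireGroup r s t u →* Multiplicative (ZMod 2))
    (ha : φ (PresentedGroup.of 0) = Multiplicative.ofAdd (1 : ZMod 2))
    (hb : φ (PresentedGroup.of 1) = Multiplicative.ofAdd (0 : ZMod 2))
    (hc : φ (PresentedGroup.of 2) = Multiplicative.ofAdd (1 : ZMod 2)) :
    Nonempty (φ.ker ≃*
      TorusBundleGroup (r * u + t * s) (-(2 * r * t)) (-(2 * s * u)) (r * u + t * s)) := by
  have hga : φ ga = Multiplicative.ofAdd (1 : ZMod 2) := ha
  have hgb : φ gb = Multiplicative.ofAdd (0 : ZMod 2) := hb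
  have hgc : φ gc = Multiplicative.ofAdd (1 : ZMod 2) := hc
  have hker : ∀ x, Psi h x ∈ φ.ker := by
    have hcomp : φ.comp (Psi h) = 1 := by
      apply PresentedGroup.ext
      intro x
      fin_cases x
      · show φ (Psi h tα) = (1 : _ →* Multiplicative (ZMod 2)) (PresentedGroup.of 0)
        rw [MonoidHom.one_apply, psi_a h, gw10_eq, map_mul, hga]
        decide
      · show φ (Psi h tβ) = (1 : _ →* Multiplicative (ZMod 2)) (PresentedGroup.of 1)
        rw [MonoidHom.one_apply, psi_b h, hgb]
        decide
      · show φ (Psi h tγ) = (1 : _ →* Multiplicative (ZMod 2)) (PresentedGroup.of 2)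
        rw [MonoidHom.one_apply, psi_g h, map_mul, map_inv, hga, hgc]
        decide
    intro x
    have := DFunLike.congr_fun hcomp x
    simpa [MonoidHom.mem_ker] using this
  let Psi' := (Psi h).codRestrict φ.ker hker
  have hinj : Function.Injective Psi' := by
    intro x y hxy
    exact psi_inj h (congrArg Subtype.val hxy)
  have hsurj : Function.Surjective Psi' := by
    intro b
    rcases cover h (b : SapphireGroup r s t u) with hgH | hgH
    · obtain ⟨x, hx⟩ := hgH
      exact ⟨x, Subtype.ext hx⟩
    · exfalso
      obtain ⟨x, hx⟩ := hgH
      have hb2 : φ (b : SapphireGroup r s t u) = 1 := MonoidHom.mem_ker.mp b.2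
      have h1 : φ (ga⁻¹ * (b : SapphireGroup r s t u)) = 1 := by
        rw [← hx]
        exact MonoidHom.mem_ker.mp (hker x)
      rw [map_mul, map_inv, hb2, mul_one, hga] at h1
      exact absurd h1 (by decide)
  exact ⟨(MulEquiv.ofBijective Psi' ⟨hinj, hsurj⟩).symm⟩
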